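/- Let E be a real normed vector space and N a smooth (1,1) tensor field on E whose Nijenhuis torsion vanishes, i.e. T(N)(X,Y) = 0 for all vector fields X, Y. Then for every positive integer k the Nijenhuis torsion of the pointwise power N^k also vanishes: T(N^k)(X,Y) = 0 for all vector fields X, Y. -/

import Mathlib

set_option synthInstance.maxHeartbeats 1000000
set_option maxHeartbeats 1000000
set_option linter.unusedVariables false


variable {E : Type*} [NormedAddCommGroup E] [NormedSpace ℝ E]

/-- Lie bracket of vector fields on `E`: `[X,Y](x) = DY(x)(X(x)) − DX(x)(Y(x))`. -/
noncomputable def lie (X Y : E → E) : E → E :=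
  fun x => fderiv ℝ Y x (X x) - fderiv ℝ X x (Y x)

/-- Pointwise action of a (1,1) tensor field on a vector field. -/
def app (N : E → E →L[ℝ] E) (X : E → E) : E → E := fun x => N x (X x)

/-- Pointwise `k`-th power of a (1,1) tensor field. -/
def pw (N : E → E →L[ℝ] E) (k : ℕ) : E → E →L[ℝ] E := fun x => (N x) ^ k

/-- Frölicher–Nijenhuis bracket of two (1,1) tensor fields, evaluated on vector fields. -/
noncomputable def fnBracket (N₁ N₂ : E → E →L[ℝ] E) (X Y : E → E) : E → E :=
  fun x =>
    N₁ x (N₂ x (lie X Y x)) + N₂ x (N₁ x (lie X Y x))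
      + lie (app N₁ X) (app N₂ Y) x + lie (app N₂ X) (app N₁ Y) x
      - N₁ x (lie (app N₂ X) Y x + lie X (app N₂ Y) x)
      - N₂ x (lie (app N₁ X) Y x + lie X (app N₁ Y) x)

/-- Nijenhuis torsion of a (1,1) tensor field, evaluated on vector fields. -/
noncomputable def tor (N : E → E →L[ℝ] E) (X Y : E → E) : E → E :=
  fun x =>
    lie (app N X) (app N Y) x
      + N x (N x (lie X Y x) - lie (app N X) Y x - lie X (app N Y) x)

/-- Haantjes tensor of a (1,1) tensor field, evaluated on vector fields. -/
noncomputable def haan (M : E → E →L[ℝ] E) (X Y : E → E) : E → E :=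
  fun x =>
    M x (M x (tor M X Y x)) + tor M (app M X) (app M Y) x
      - M x (tor M (app M X) Y x + tor M X (app M Y) x)

/-- The bracket `[A,B]_X = [AX,BX] − A[X,BX] + B[X,AX]` of two (1,1) tensor fields
with respect to a vector field `X`. -/
noncomputable def brX (A B : E → E →L[ℝ] E) (X : E → E) : E → E :=
  fun x =>
    lie (app A X) (app B X) x - A x (lie X (app B X) x) + B x (lie X (app A X) x)

/-- A 1-form is closed iff its Fréchet derivative is symmetric. -/
def IsClosedOneForm (ρ : E → E →L[ℝ] ℝ) : Prop :=
  ∀ x u v, fderiv ℝ ρ x u v = fderiv ℝ ρ x v u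

/-- tensoriality of the torsion -/
lemma tor_eval (M : E → E →L[ℝ] E) (X Y : E → E) (x : E)
    (hM : DifferentiableAt ℝ M x) (hX : DifferentiableAt ℝ X x)
    (hY : DifferentiableAt ℝ Y x) :
    tor M X Y x =
      fderiv ℝ M x (M x (X x)) (Y x) - fderiv ℝ M x (M x (Y x)) (X x)
        + M x (fderiv ℝ M x (Y x) (X x)) - M x (fderiv ℝ M x (X x) (Y x)) := by
  have hAX : fderiv ℝ (app M X) x
      = (M x).comp (fderiv ℝ X x) + (fderiv ℝ M x).flip (X x) := fderiv_clm_apply hM hX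
  have hAY : fderiv ℝ (app M Y) x
      = (M x).comp (fderiv ℝ Y x) + (fderiv ℝ M x).flip (Y x) := fderiv_clm_apply hM hY
  simp only [tor, lie, app, hAX, hAY, ContinuousLinearMap.add_apply,
    ContinuousLinearMap.comp_apply, ContinuousLinearMap.flip_apply, map_sub, map_add]
  abel

/-- derivative of the pointwise power -/
lemma pw_fderiv (N : E → E →L[ℝ] E) (hN : ContDiff ℝ (⊤ : ℕ∞) N) (x : E) (k : ℕ) (w u : E) :
    fderiv ℝ (pw N k) x w u
      = ∑ i ∈ Finset.range k, ((N x) ^ i) (fderiv ℝ N x w (((N x) ^ (k - 1 - i)) u)) := by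
  induction k generalizing u with
  | zero =>
      have : pw N 0 = fun _ : E => (1 : E →L[ℝ] E) := by funext y; simp [pw]
      simp [this]
  | succ k ih =>
      have hNk : HasFDerivAt (pw N k) (fderiv ℝ (pw N k) x) x :=
        ((hN.pow k).differentiable (by simp) x).hasFDerivAt
      have hN1 : HasFDerivAt N (fderiv ℝ N x) x :=
        (hN.differentiable (by simp) x).hasFDerivAt
      have hmul : HasFDerivAt (pw N (k + 1))
          (N x • fderiv ℝ (pw N k) x + (fderiv ℝ N x).smulRight (pw N k x)) x := by
        have : pw N (k + 1) = fun y => N y * pw N k y := by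
          funext y; simp [pw, pow_succ']
        rw [this]; exact hN1.mul' hNk
      rw [hmul.fderiv]
      have hterm : (N x • fderiv ℝ (pw N k) x + (fderiv ℝ N x).smulRight (pw N k x)) w u
          = N x (fderiv ℝ (pw N k) x w u) + fderiv ℝ N x w (((N x) ^ k) u) := by
        simp [pw, ContinuousLinearMap.smul_apply, ContinuousLinearMap.smulRight_apply,
          ContinuousLinearMap.mul_apply]
      rw [hterm, ih, Finset.sum_range_succ', map_sum]
      simp only [pow_zero, ContinuousLinearMap.one_apply, Nat.add_sub_cancel]
      congr 1
      apply Finset.sum_congr rfl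
      intro i hi
      have h1 : k - (i + 1) = k - 1 - i := by omega
      rw [h1, pow_succ']
      simp [ContinuousLinearMap.mul_apply]

/-- telescoping -/
lemma tele (g : E →L[ℝ] E) (B : E → E → E) (k : ℕ) (u w : E) :
    B ((g ^ k) u) w - (g ^ k) (B u w)
      = ∑ j ∈ Finset.range k,
          (g ^ j) (B (g ((g ^ (k - 1 - j)) u)) w - g (B ((g ^ (k - 1 - j)) u) w)) := by
  induction k generalizing u with
  | zero => simp
  | succ k ih =>
      have e1 : (g ^ (k + 1)) u = (g ^ k) (g u) := by
        rw [pow_succ]; simp [ContinuousLinearMap.mul_apply]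
      have e2 : (g ^ (k + 1)) (B u w) = (g ^ k) (g (B u w)) := by
        rw [pow_succ]; simp [ContinuousLinearMap.mul_apply]
      have e3 : B ((g ^ k) (g u)) w - (g ^ k) (g (B u w))
          = (B ((g ^ k) (g u)) w - (g ^ k) (B (g u) w))
            + (g ^ k) (B (g u) w - g (B u w)) := by
        rw [map_sub]; abel
      rw [e1, e2, e3, ih (g u), Finset.sum_range_succ]
      congr 1
      · apply Finset.sum_congr rfl
        intro j hj
        have hjk : j < k := Finset.mem_range.mp hj
        have h4 : (g ^ (k - 1 - j)) (g u) = (g ^ (k + 1 - 1 - j)) u := by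
          rw [show k + 1 - 1 - j = (k - 1 - j) + 1 by omega, pow_succ]
          simp [ContinuousLinearMap.mul_apply]
        rw [h4]
      · simp

theorem stmt2 (N : E → E →L[ℝ] E) (hN : ContDiff ℝ (⊤ : ℕ∞) N)
    (hT : ∀ X Y : E → E, ContDiff ℝ (⊤ : ℕ∞) X → ContDiff ℝ (⊤ : ℕ∞) Y →
      ∀ x, tor N X Y x = 0)
    (k : ℕ) (hk : 0 < k)
    (X Y : E → E) (hX : ContDiff ℝ (⊤ : ℕ∞) X) (hY : ContDiff ℝ (⊤ : ℕ∞) Y) (x : E) :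
    tor (pw N k) X Y x = 0 := by
  have hNd : DifferentiableAt ℝ N x := (hN.differentiable (by simp)) x
  -- symmetry of C(a,b) = B(Na,b) - N B(a,b) from the vanishing torsion of N
  have hC : ∀ a b : E,
      fderiv ℝ N x (N x a) b - N x (fderiv ℝ N x a b)
        = fderiv ℝ N x (N x b) a - N x (fderiv ℝ N x b a) := by
    intro a b
    have h := hT (fun _ => a) (fun _ => b) contDiff_const contDiff_const x
    rw [tor_eval N _ _ x hNd (differentiableAt_const a) (differentiableAt_const b)] at h
    refine sub_eq_zero.mp ?_
    rw [← h]; abel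
  -- commuting powers
  have comm : ∀ (i j : ℕ) (z : E), (N x ^ i) ((N x ^ j) z) = (N x ^ j) ((N x ^ i) z) := by
    intro i j z
    rw [← ContinuousLinearMap.mul_apply, ← ContinuousLinearMap.mul_apply, pow_mul_comm]
  have hMd : DifferentiableAt ℝ (pw N k) x :=
    ((hN.pow k).differentiable (by simp)) x
  rw [tor_eval (pw N k) X Y x hMd
    ((hX.differentiable (by simp)) x)
    ((hY.differentiable (by simp)) x)]
  simp only [pw_fderiv N hN x, pw]
  set u := X x
  set v := Y x
  -- the two double-sum reductions
  have key : ∀ a b : E,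
      (∑ i ∈ Finset.range k,
          (N x ^ i) (fderiv ℝ N x ((N x ^ k) a) ((N x ^ (k - 1 - i)) b)))
        - (N x ^ k) (∑ i ∈ Finset.range k,
            (N x ^ i) (fderiv ℝ N x a ((N x ^ (k - 1 - i)) b)))
      = ∑ i ∈ Finset.range k, ∑ j ∈ Finset.range k,
          (N x ^ i) ((N x ^ j)
            (fderiv ℝ N x (N x ((N x ^ (k - 1 - j)) a)) ((N x ^ (k - 1 - i)) b)
              - N x (fderiv ℝ N x ((N x ^ (k - 1 - j)) a) ((N x ^ (k - 1 - i)) b)))) := by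
    intro a b
    rw [map_sum, ← Finset.sum_sub_distrib]
    refine Finset.sum_congr rfl fun i _ => ?_
    rw [comm k i, ← map_sub]
    have ht := tele (N x) (fun p q => fderiv ℝ N x p q) k a ((N x ^ (k - 1 - i)) b)
    rw [ht, map_sum]
  have goal_eq :
      (∑ i ∈ Finset.range k,
          (N x ^ i) (fderiv ℝ N x ((N x ^ k) u) ((N x ^ (k - 1 - i)) v)))
        - (∑ i ∈ Finset.range k,
          (N x ^ i) (fderiv ℝ N x ((N x ^ k) v) ((N x ^ (k - 1 - i)) u)))
        + (N x ^ k) (∑ i ∈ Finset.range k,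
            (N x ^ i) (fderiv ℝ N x v ((N x ^ (k - 1 - i)) u)))
        - (N x ^ k) (∑ i ∈ Finset.range k,
            (N x ^ i) (fderiv ℝ N x u ((N x ^ (k - 1 - i)) v))) = 0 := by
    have h1 := key u v
    have h2 := key v u
    have hmain :
        (∑ i ∈ Finset.range k,
            (N x ^ i) (fderiv ℝ N x ((N x ^ k) u) ((N x ^ (k - 1 - i)) v)))
          - (N x ^ k) (∑ i ∈ Finset.range k,
              (N x ^ i) (fderiv ℝ N x u ((N x ^ (k - 1 - i)) v)))
        = (∑ i ∈ Finset.range k,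
            (N x ^ i) (fderiv ℝ N x ((N x ^ k) v) ((N x ^ (k - 1 - i)) u)))
          - (N x ^ k) (∑ i ∈ Finset.range k,
              (N x ^ i) (fderiv ℝ N x v ((N x ^ (k - 1 - i)) u))) := by
      rw [h1, h2]
      rw [Finset.sum_comm]
      refine Finset.sum_congr rfl fun i _ => Finset.sum_congr rfl fun j _ => ?_
      rw [hC ((N x ^ (k - 1 - i)) u) ((N x ^ (k - 1 - j)) v), comm j i]
    have h3 := sub_eq_zero.mpr hmain
    rw [← h3]; abel
  exact goal_eq
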